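/- arXiv:1003.4771 — 3 statements merged into one kernel-verified Lean document; each statement's English description precedes it below -/
import Mathlib

section
/- Let σ, τ > 0, στ < 1, η² > 4σ, 1 + αβ > 0 and α + σβ > 0, where α = (η + θσ)/(1 - στ), β = (ητ + θ)/(1 - στ) and η = α - σβ. Define t* = (α + σβ)(1 - στ)/(2σ√((α - σβ)² - 4σ)) - (1 + στ)/(2σ). Then (1 + σ t*)(t* + τ) = (1 - στ)²(1 + αβ)/(η² - 4σ) > 0. -/
theorem tstar_identity (σ τ η θ α β tstar : ℝ)
    (hσ : 0 < σ) (hτ : 0 < τ) (hστ : σ * τ < 1) (hη : η ^ 2 > 4 * σ)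
    (hα : α = (η + θ * σ) / (1 - σ * τ))
    (hβ : β = (η * τ + θ) / (1 - σ * τ))
    (hab : 1 + α * β > 0) (habs : α + σ * β > 0)
    (ht : tstar = (α + σ * β) * (1 - σ * τ) /
        (2 * σ * Real.sqrt ((α - σ * β) ^ 2 - 4 * σ)) - (1 + σ * τ) / (2 * σ)) :
    (1 + σ * tstar) * (tstar + τ) = (1 - σ * τ) ^ 2 * (1 + α * β) / (η ^ 2 - 4 * σ) ∧
    0 < (1 + σ * tstar) * (tstar + τ) := by
  have h1 : (1 : ℝ) - σ * τ ≠ 0 := by nlinarith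
  have heq : α - σ * β = η := by
    rw [hα, hβ]; field_simp; ring
  have hη4 : (0:ℝ) < η ^ 2 - 4 * σ := by linarith
  set s := Real.sqrt ((α - σ * β) ^ 2 - 4 * σ) with hsdef
  have hs2 : s ^ 2 = η ^ 2 - 4 * σ := by
    rw [hsdef, heq, Real.sq_sqrt (by linarith)]
  have hs : 0 < s := by
    rw [hsdef]; apply Real.sqrt_pos.mpr; rw [heq]; linarith
  have key : (1 + σ * tstar) * (tstar + τ) =
      (1 - σ * τ) ^ 2 * (1 + α * β) / (η ^ 2 - 4 * σ) := by
    have hsne : s ≠ 0 := hs.ne'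
    have e1 : 1 + σ * tstar = (1 - σ * τ) * (α + σ * β + s) / (2 * s) := by
      rw [ht]; field_simp; ring
    have e2 : tstar + τ = (1 - σ * τ) * (α + σ * β - s) / (2 * σ * s) := by
      rw [ht]; field_simp; ring
    have hnum : (α + σ * β + s) * (α + σ * β - s) = 4 * σ * (1 + α * β) := by
      have : (α + σ * β + s) * (α + σ * β - s) = (α + σ * β) ^ 2 - s ^ 2 := by ring
      rw [this, hs2, ← heq]; ring
    rw [e1, e2, div_mul_div_comm, mul_mul_mul_comm, hnum]
    rw [show (2 * s) * (2 * σ * s) = 4 * σ * s ^ 2 by ring, hs2]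
    field_simp
  refine ⟨key, ?_⟩
  rw [key]
  positivity
end

section
/- Under the hypotheses σ, τ > 0, στ < 1, η² > 4σ, θ² > 4τ, 1 + αβ > 0, α + σβ > 0 (with α = (η + θσ)/(1 - στ), β = (ητ + θ)/(1 - στ)), the function a₋(t) = ((α + σβ)t + β + τα - 2√((1 + σt)(t + τ)(1 + αβ)))/(1 - στ) attains its global minimum on (0, ∞) at t* = (α + σβ)(1 - στ)/(2σ√(η² - 4σ)) - (1 + στ)/(2σ), and a₋(t*) = (-η + √(η² - 4σ))/(2σ). Consequently a₋(t) ≥ (-η + √(η² - 4σ))/(2σ) for all t > 0. -/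
theorem a_minus_global_minimum (σ τ η θ α β tstar bplus : ℝ)
    (hσ : 0 < σ) (hτ : 0 < τ) (hστ : σ * τ < 1)
    (hη : η ^ 2 > 4 * σ) (hθ : θ ^ 2 > 4 * τ)
    (hα : α = (η + θ * σ) / (1 - σ * τ))
    (hβ : β = (η * τ + θ) / (1 - σ * τ))
    (hab : 1 + α * β > 0) (habs : α + σ * β > 0)
    (a : ℝ → ℝ)
    (ha : ∀ t, a t = ((α + σ * β) * t + β + τ * α
        - 2 * Real.sqrt ((1 + σ * t) * (t + τ) * (1 + α * β))) / (1 - σ * τ))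
    (ht : tstar = (α + σ * β) * (1 - σ * τ) / (2 * σ * Real.sqrt (η ^ 2 - 4 * σ))
        - (1 + σ * τ) / (2 * σ))
    (hb : bplus = (-η + Real.sqrt (η ^ 2 - 4 * σ)) / (2 * σ)) :
    (∀ t > 0, a tstar ≤ a t) ∧ a tstar = bplus ∧ ∀ t > 0, bplus ≤ a t := by
  have hu : 0 < 1 - σ * τ := by linarith
  set s := Real.sqrt (η ^ 2 - 4 * σ) with hsdef
  have hs2 : s ^ 2 = η ^ 2 - 4 * σ := Real.sq_sqrt (by linarith)
  have hs0 : 0 < s := Real.sqrt_pos.2 (by linarith)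
  have hη' : α - σ * β = η := by
    rw [hα, hβ]; field_simp; ring
  have hs2' : s ^ 2 = (α - σ * β) ^ 2 - 4 * σ := by rw [hη']; exact hs2
  have hc2 : (α + σ * β) ^ 2 = s ^ 2 + 4 * σ * (1 + α * β) := by
    rw [hs2']; ring
  have hcs : s < α + σ * β := by nlinarith
  have hN : 0 < (α + σ * β) * (1 + σ * τ) - (1 - σ * τ) * s := by
    nlinarith [mul_pos (sub_pos.2 hcs) (show (0:ℝ) < 1 + σ * τ by positivity),
      mul_pos hs0 (mul_pos hσ hτ)]
  have ht' : 2 * σ * s * tstar = (α + σ * β) * (1 - σ * τ) - (1 + σ * τ) * s := by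
    rw [ht]; field_simp
  have hb' : 2 * σ * bplus = -η + s := by
    rw [hb]; field_simp
  have hβτα : 2 * σ * (β + τ * α) = (α + σ * β) * (1 + σ * τ) - (1 - σ * τ) * η := by
    linear_combination (σ * τ - 1) * hη'
  have hkey : ∀ t, (2 * σ * (α + σ * β) * t + ((α + σ * β) * (1 + σ * τ) - (1 - σ * τ) * s)) ^ 2
      - 16 * σ ^ 2 * (1 + α * β) * ((1 + σ * t) * (t + τ))
      = (2 * σ * s * t - ((α + σ * β) * (1 - σ * τ) - (1 + σ * τ) * s)) ^ 2 := by
    intro t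
    linear_combination (-(4 : ℝ)) * σ * (1 + σ * t) * (t + τ) * hs2'
  have haf : ∀ t, 2 * σ * ((1 - σ * τ) * a t)
      = 2 * σ * (α + σ * β) * t + ((α + σ * β) * (1 + σ * τ) - (1 - σ * τ) * s)
        + 2 * σ * ((1 - σ * τ) * bplus)
        - 4 * σ * Real.sqrt ((1 + σ * t) * (t + τ) * (1 + α * β)) := by
    intro t
    have h1 : (1 - σ * τ) * a t = (α + σ * β) * t + β + τ * α
        - 2 * Real.sqrt ((1 + σ * t) * (t + τ) * (1 + α * β)) := by
      rw [ha t]; field_simp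
    linear_combination 2 * σ * h1 + hβτα + (σ * τ - 1) * hb'
  have hmain : ∀ t > 0, bplus ≤ a t := by
    intro t htpos
    have hL : 0 < 2 * σ * (α + σ * β) * t + ((α + σ * β) * (1 + σ * τ) - (1 - σ * τ) * s) := by
      nlinarith [mul_pos (mul_pos hσ habs) htpos]
    have h5 : 16 * σ ^ 2 * ((1 + σ * t) * (t + τ) * (1 + α * β))
        = (2 * σ * (α + σ * β) * t + ((α + σ * β) * (1 + σ * τ) - (1 - σ * τ) * s)) ^ 2
          - (2 * σ * s * t - ((α + σ * β) * (1 - σ * τ) - (1 + σ * τ) * s)) ^ 2 := by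
      linear_combination (-1 : ℝ) * hkey t
    have hX : (1 + σ * t) * (t + τ) * (1 + α * β)
        ≤ ((2 * σ * (α + σ * β) * t + ((α + σ * β) * (1 + σ * τ) - (1 - σ * τ) * s)) / (4 * σ)) ^ 2 := by
      rw [div_pow, le_div_iff₀ (by positivity)]
      linarith [h5, sq_nonneg (2 * σ * s * t - ((α + σ * β) * (1 - σ * τ) - (1 + σ * τ) * s))]
    have hsq : Real.sqrt ((1 + σ * t) * (t + τ) * (1 + α * β))
        ≤ (2 * σ * (α + σ * β) * t + ((α + σ * β) * (1 + σ * τ) - (1 - σ * τ) * s)) / (4 * σ) := by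
      calc Real.sqrt ((1 + σ * t) * (t + τ) * (1 + α * β))
          ≤ Real.sqrt (((2 * σ * (α + σ * β) * t + ((α + σ * β) * (1 + σ * τ) - (1 - σ * τ) * s)) / (4 * σ)) ^ 2) :=
            Real.sqrt_le_sqrt hX
        _ = _ := Real.sqrt_sq (by positivity)
    have h4σ : (4:ℝ) * σ ≠ 0 := by positivity
    have hsq4 := mul_le_mul_of_nonneg_right hsq (by positivity : (0:ℝ) ≤ 4 * σ)
    rw [div_mul_cancel₀ _ h4σ] at hsq4
    by_contra h
    push_neg at h
    linarith [haf t, hsq4, mul_pos (mul_pos (mul_pos two_pos hσ) hu) (sub_pos.2 h)]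
  have hRHS0 : 2 * σ * s * tstar - ((α + σ * β) * (1 - σ * τ) - (1 + σ * τ) * s) = 0 := by
    rw [ht']; ring
  have hLts : s * (2 * σ * (α + σ * β) * tstar + ((α + σ * β) * (1 + σ * τ) - (1 - σ * τ) * s))
      = 4 * σ * (1 + α * β) * (1 - σ * τ) := by
    linear_combination (α + σ * β) * ht' + (1 - σ * τ) * hc2
  have hLtspos : 0 < 2 * σ * (α + σ * β) * tstar + ((α + σ * β) * (1 + σ * τ) - (1 - σ * τ) * s) := by
    by_contra h
    push_neg at h
    have hpos : 0 < 4 * σ * (1 + α * β) * (1 - σ * τ) :=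
      mul_pos (mul_pos (by linarith) hab) hu
    linarith [mul_nonpos_of_nonneg_of_nonpos hs0.le h, hLts, hpos]
  have hXeq : (1 + σ * tstar) * (tstar + τ) * (1 + α * β)
      = ((2 * σ * (α + σ * β) * tstar + ((α + σ * β) * (1 + σ * τ) - (1 - σ * τ) * s)) / (4 * σ)) ^ 2 := by
    have hk := hkey tstar
    rw [hRHS0] at hk
    rw [div_pow, eq_div_iff (by positivity)]
    linear_combination (-1 : ℝ) * hk
  have hsqrt_eq : Real.sqrt ((1 + σ * tstar) * (tstar + τ) * (1 + α * β))
      = (2 * σ * (α + σ * β) * tstar + ((α + σ * β) * (1 + σ * τ) - (1 - σ * τ) * s)) / (4 * σ) := by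
    rw [hXeq]
    exact Real.sqrt_sq (by positivity)
  have heq : a tstar = bplus := by
    have h1 := haf tstar
    rw [hsqrt_eq] at h1
    have h2 : 2 * σ * ((1 - σ * τ) * a tstar) = 2 * σ * ((1 - σ * τ) * bplus) := by
      rw [h1]; field_simp; ring
    have h3 : (2 * σ * (1 - σ * τ)) ≠ 0 := by positivity
    have := mul_left_cancel₀ h3 (by linarith [h2] : (2 * σ * (1 - σ * τ)) * a tstar = (2 * σ * (1 - σ * τ)) * bplus)
    exact this
  exact ⟨fun t htp => heq ▸ hmain t htp, heq, hmain⟩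
end

section
/- Suppose σ, τ > 0, στ < 1, η > 0, θ > 0, θ² > 4τ, η² > 4σ and 1 + αβ > 0 where α = (η + θσ)/(1 - στ), β = (ητ + θ)/(1 - στ). Then 2τ√(θ² - 4τ)/((θ - √(θ² - 4τ))(1 + στ) + 2ητ) < (θ + √(θ² - 4τ))/(η + √(η² - 4σ)). -/
theorem atom_interval_bound (σ τ η θ α β : ℝ)
    (hσ : 0 < σ) (hτ : 0 < τ) (hστ : σ * τ < 1)
    (hη0 : 0 < η) (hθ0 : 0 < θ)
    (hη : η ^ 2 > 4 * σ) (hθ : θ ^ 2 > 4 * τ)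
    (hα : α = (η + θ * σ) / (1 - σ * τ))
    (hβ : β = (η * τ + θ) / (1 - σ * τ))
    (hab : 1 + α * β > 0) :
    2 * τ * Real.sqrt (θ ^ 2 - 4 * τ) /
        ((θ - Real.sqrt (θ ^ 2 - 4 * τ)) * (1 + σ * τ) + 2 * η * τ)
      < (θ + Real.sqrt (θ ^ 2 - 4 * τ)) / (η + Real.sqrt (η ^ 2 - 4 * σ)) := by
  set s := Real.sqrt (θ ^ 2 - 4 * τ) with hsdef
  set r := Real.sqrt (η ^ 2 - 4 * σ) with hrdef
  have hs2 : s ^ 2 = θ ^ 2 - 4 * τ := Real.sq_sqrt (by linarith)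
  have hr2 : r ^ 2 = η ^ 2 - 4 * σ := Real.sq_sqrt (by linarith)
  have hs0 : 0 ≤ s := Real.sqrt_nonneg _
  have hr0 : 0 ≤ r := Real.sqrt_nonneg _
  have hsθ : s < θ := by nlinarith
  have hD : 0 < (θ - s) * (1 + σ * τ) + 2 * η * τ := by
    nlinarith [mul_pos (sub_pos.mpr hsθ) (mul_pos hσ hτ), mul_pos hη0 hτ]
  have hR : 0 < η + r := by linarith
  rw [div_lt_div_iff₀ hD hR]
  have key : s * r < η * θ + 2 * (1 + σ * τ) := by
    nlinarith [mul_nonneg hs0 hr0, sq_nonneg (s * r), sq_nonneg (1 - σ * τ),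
      mul_pos hη0 hθ0, mul_pos hσ hτ, mul_pos (mul_pos hη0 hθ0) (mul_pos hσ hτ),
      mul_pos hτ (mul_pos hη0 hη0), mul_pos hσ (mul_pos hθ0 hθ0)]
  nlinarith [mul_pos hτ (sub_pos.mpr key), hs2]
end
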